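/- (Lemma 2.1, Poincaré inequality with Gaussian weight) Let t ≥ 0 and α ∈ [1/4, 1/2]. Let g : [0,∞) → ℝ be continuously differentiable with g(0) = 0 (alternatively, g'(0) = 0), with g(y) → 0 as y → ∞, and such that θ_α(t,·)g and θ_α(t,·)g' belong to L²(0,∞). Then (α/⟨t⟩) ∫₀^∞ θ_α(t,y)² g(y)² dy ≤ ∫₀^∞ θ_α(t,y)² g'(y)² dy. -/

import Mathlib

open MeasureTheory Real Set Filter Topology

/-- The Gaussian weight `θ_α(t,y) = exp(α z(t,y)²/4)` with `z(t,y) = y/√⟨t⟩`, `⟨t⟩ = 1+t`. -/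
noncomputable def theta (α t y : ℝ) : ℝ :=
  Real.exp (α * (y / Real.sqrt (1 + t)) ^ 2 / 4)

/-- **Lemma 2.1 (Poincaré inequality with Gaussian weight).**
Let `t ≥ 0` and `α ∈ [1/4, 1/2]`.  If `g` is continuously differentiable, vanishes at `0`
(or its derivative vanishes at `0`), tends to `0` at infinity, and `θ_α g`, `θ_α g'` are
square integrable on `(0,∞)`, then
`(α/⟨t⟩) ∫₀^∞ θ_α² g² ≤ ∫₀^∞ θ_α² g'²`. -/
theorem gaussian_weighted_poincare
    (t α : ℝ) (ht : 0 ≤ t) (hα : α ∈ Set.Icc (1/4 : ℝ) (1/2))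
    (g : ℝ → ℝ) (hg : ContDiff ℝ 1 g)
    (hbc : g 0 = 0 ∨ deriv g 0 = 0)
    (hlim : Filter.Tendsto g Filter.atTop (nhds 0))
    (hL2 : Integrable (fun y => (theta α t y * g y) ^ 2) (volume.restrict (Set.Ici 0)))
    (hL2' : Integrable (fun y => (theta α t y * deriv g y) ^ 2) (volume.restrict (Set.Ici 0))) :
    (α / (1 + t)) * ∫ y in Set.Ici (0:ℝ), (theta α t y * g y) ^ 2 ≤
      ∫ y in Set.Ici (0:ℝ), (theta α t y * deriv g y) ^ 2 := by
  have h1t : (0:ℝ) < 1 + t := by linarith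
  set β : ℝ := α / (2 * (1 + t)) with hβdef
  have hβ : 0 < β := by
    apply div_pos (by linarith [hα.1]) (by linarith)
  -- rewrite theta
  have htheta_eq : ∀ y, theta α t y = Real.exp (β * y ^ 2 / 2) := by
    intro y
    unfold theta
    rw [div_pow, Real.sq_sqrt h1t.le]
    congr 1
    rw [hβdef]
    have hne : (1+t) ≠ 0 := h1t.ne'
    field_simp
    ring
  have hθpos : ∀ y, 0 < theta α t y := fun y => by rw [htheta_eq]; exact Real.exp_pos _
  -- derivative of theta
  have hθD : ∀ y, HasDerivAt (fun y => theta α t y) (β * y * theta α t y) y := by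
    intro y
    have hin : HasDerivAt (fun y : ℝ => β * y ^ 2 / 2) (β * y) y := by
      have h := ((hasDerivAt_pow 2 y).const_mul β).div_const 2
      refine h.congr_deriv ?_
      push_cast
      ring
    have h2 : HasDerivAt (fun y => Real.exp (β * y ^ 2 / 2)) (β * y * theta α t y) y := by
      rw [htheta_eq y]
      simpa [mul_comm] using hin.exp
    exact h2.congr_of_eventuallyEq (Filter.Eventually.of_forall fun z => htheta_eq z)
  -- the function h = θ g and its derivative
  set h : ℝ → ℝ := fun y => theta α t y * g y with hhdef
  set h' : ℝ → ℝ := fun y => β * y * h y + theta α t y * deriv g y with hh'def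
  have hgd : ∀ y, HasDerivAt g (deriv g y) y := fun y =>
    ((hg.differentiable one_ne_zero) y).hasDerivAt
  have hH : ∀ y, HasDerivAt h (h' y) y := by
    intro y
    have := (hθD y).mul (hgd y)
    refine this.congr_deriv ?_
    simp only [hhdef, hh'def]
    ring
  -- continuity facts
  have hθc : Continuous (fun y => theta α t y) := by
    simp only [funext htheta_eq]
    fun_prop
  have hgc : Continuous g := hg.continuous
  have hg'c : Continuous (deriv g) := hg.continuous_deriv le_rfl
  have hhc : Continuous h := hθc.mul hgc
  have hh'c : Continuous h' := by
    apply Continuous.add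
    · exact (continuous_const.mul continuous_id).mul hhc
    · exact hθc.mul hg'c
  -- pointwise identity
  have hkey : ∀ y, (theta α t y * deriv g y) ^ 2
      = (h' y + β * y * h y) ^ 2 + 2 * β * (h y) ^ 2
        - 2 * β * ((h y) ^ 2 + 2 * y * h y * h' y) := by
    intro y
    have e : theta α t y * deriv g y = h' y - β * y * h y := by
      simp only [hh'def]; ring
    rw [e]; ring
  -- FTC for  y ↦ y * h y ^ 2
  have hFTC : ∀ R : ℝ, 0 ≤ R →
      ∫ y in (0:ℝ)..R, ((h y) ^ 2 + 2 * y * h y * h' y) = R * (h R) ^ 2 := by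
    intro R hR
    have hP : ∀ y ∈ Set.uIcc (0:ℝ) R, HasDerivAt (fun y => y * (h y) ^ 2)
        ((h y) ^ 2 + 2 * y * h y * h' y) y := by
      intro y _
      have h0 := (hasDerivAt_id y).mul ((hH y).pow 2)
      refine h0.congr_deriv ?_
      simp only [id_eq, pow_one, Pi.pow_apply]
      push_cast
      ring
    have hint : IntervalIntegrable (fun y => (h y) ^ 2 + 2 * y * h y * h' y) volume 0 R :=
      (((hhc.pow 2).add (((continuous_const.mul continuous_id).mul hhc).mul hh'c))).intervalIntegrable 0 R
    have := intervalIntegral.integral_eq_sub_of_hasDerivAt hP hint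
    simpa using this
  -- integrability of the pieces on [0, R]
  have hint1 : ∀ R : ℝ, IntervalIntegrable (fun y => (h' y + β * y * h y) ^ 2) volume 0 R :=
    fun R => ((hh'c.add ((continuous_const.mul continuous_id).mul hhc)).pow 2).intervalIntegrable 0 R
  have hint2 : ∀ R : ℝ, IntervalIntegrable (fun y => (h y) ^ 2) volume 0 R :=
    fun R => (hhc.pow 2).intervalIntegrable 0 R
  have hint3 : ∀ R : ℝ, IntervalIntegrable (fun y => (h y) ^ 2 + 2 * y * h y * h' y) volume 0 R :=
    fun R => ((hhc.pow 2).add (((continuous_const.mul continuous_id).mul hhc).mul hh'c)).intervalIntegrable 0 R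
  set B : ℝ := ∫ y in Set.Ici (0:ℝ), (theta α t y * deriv g y) ^ 2 with hBdef
  -- the key inequality for each R ≥ 0
  have hmain : ∀ R : ℝ, 0 ≤ R →
      2 * β * (∫ y in (0:ℝ)..R, (h y) ^ 2) ≤ B + 2 * β * (R * (h R) ^ 2) := by
    intro R hR
    have eq1 : (∫ y in (0:ℝ)..R, (theta α t y * deriv g y) ^ 2)
        = (∫ y in (0:ℝ)..R, (h' y + β * y * h y) ^ 2)
          + 2 * β * (∫ y in (0:ℝ)..R, (h y) ^ 2)
          - 2 * β * (R * (h R) ^ 2) := by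
      rw [intervalIntegral.integral_congr (g := fun y => (h' y + β * y * h y) ^ 2
            + 2 * β * (h y) ^ 2 - 2 * β * ((h y) ^ 2 + 2 * y * h y * h' y))
          (fun y _ => hkey y)]
      rw [intervalIntegral.integral_sub (((hint1 R).add (((hint2 R).const_mul (2*β))))
          ) ((hint3 R).const_mul (2*β)),
        intervalIntegral.integral_add (hint1 R) ((hint2 R).const_mul (2*β)),
        intervalIntegral.integral_const_mul, intervalIntegral.integral_const_mul,
        hFTC R hR]
    have hnn : 0 ≤ ∫ y in (0:ℝ)..R, (h' y + β * y * h y) ^ 2 :=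
      intervalIntegral.integral_nonneg hR (fun y _ => sq_nonneg _)
    have hle : (∫ y in (0:ℝ)..R, (theta α t y * deriv g y) ^ 2) ≤ B := by
      rw [intervalIntegral.integral_of_le hR]
      apply setIntegral_mono_set hL2'
      · exact Filter.Eventually.of_forall (fun y => sq_nonneg _)
      · exact Filter.Eventually.of_forall (fun y hy => hy.1.le)
    linarith
  -- pass to the limit
  have hIoi : IntegrableOn (fun y => (h y) ^ 2) (Set.Ioi (0:ℝ)) := by
    have h0 : IntegrableOn (fun y => (h y) ^ 2) (Set.Ici (0:ℝ)) := hL2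
    exact h0.mono_set Set.Ioi_subset_Ici_self
  set A : ℝ := ∫ y in Set.Ioi (0:ℝ), (h y) ^ 2 with hAdef
  have hTend : Tendsto (fun R => ∫ y in (0:ℝ)..R, (h y) ^ 2) atTop (𝓝 A) :=
    intervalIntegral_tendsto_integral_Ioi 0 hIoi tendsto_id
  -- the boundary term is frequently small
  have hfreq : ∀ ε : ℝ, 0 < ε → ∃ᶠ R in atTop, R * (h R) ^ 2 < ε := by
    intro ε hε
    by_contra hcon
    rw [Filter.not_frequently] at hcon
    simp only [not_lt] at hcon
    obtain ⟨M, hM⟩ := hcon.exists_forall_of_atTop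
    set M' : ℝ := max M 1 with hM'def
    have hM'pos : (0:ℝ) < M' := lt_of_lt_of_le zero_lt_one (le_max_right _ _)
    have hbad : IntegrableOn (fun y => ε * y⁻¹) (Set.Ioi M') := by
      apply Integrable.mono' (hIoi.mono_set (Set.Ioi_subset_Ioi hM'pos.le))
      · exact (measurable_const.mul measurable_inv).aestronglyMeasurable
      · filter_upwards [ae_restrict_mem measurableSet_Ioi] with y hy
        have hy0 : 0 < y := hM'pos.trans hy
        have h1 : ε ≤ y * (h y) ^ 2 := hM y ((le_max_left _ _).trans (le_of_lt hy))
        rw [Real.norm_eq_abs, abs_of_nonneg (by positivity),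
          ← div_eq_mul_inv, div_le_iff₀ hy0, mul_comm]
        exact h1
    have : IntegrableOn (fun y : ℝ => y⁻¹) (Set.Ioi M') := by
      have h0 := hbad.const_mul ε⁻¹
      have e : (fun y : ℝ => ε⁻¹ * (ε * y⁻¹)) = fun y : ℝ => y⁻¹ := by
        funext y; rw [← mul_assoc, inv_mul_cancel₀ hε.ne', one_mul]
      rwa [e] at h0
    exact not_IntegrableOn_Ioi_inv this
  -- conclude
  have hgoal : 2 * β * A ≤ B := by
    by_contra hcon
    push_neg at hcon
    set ε : ℝ := (2 * β * A - B) / 2 with hεdef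
    have hε : 0 < ε := by simp only [hεdef]; linarith
    have hev : ∀ᶠ R in atTop, B + ε < 2 * β * (∫ y in (0:ℝ)..R, (h y) ^ 2) := by
      have : B + ε < 2 * β * A := by simp only [hεdef]; linarith
      exact (hTend.const_mul (2 * β)).eventually (eventually_gt_nhds this)
    have := ((hfreq ((2*β)⁻¹ * ε) (by positivity)).and_eventually
      (hev.and (eventually_ge_atTop (0:ℝ)))).exists
    obtain ⟨R, hR1, hR2, hR3⟩ := this
    have := hmain R hR3
    have h2 : 2 * β * (R * (h R) ^ 2) < ε := by
      have hb : (0:ℝ) < 2 * β := by positivity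
      calc 2 * β * (R * (h R) ^ 2) < 2 * β * ((2 * β)⁻¹ * ε) :=
            mul_lt_mul_of_pos_left hR1 hb
        _ = ε := by field_simp
    linarith
  -- translate the goal
  have hcoef : α / (1 + t) = 2 * β := by rw [hβdef]; field_simp
  have hAeq : (∫ y in Set.Ici (0:ℝ), (theta α t y * g y) ^ 2) = A := by
    rw [hAdef]
    exact (MeasureTheory.integral_Ici_eq_integral_Ioi)
  rw [hcoef, hAeq]
  exact hgoal
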